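/- Let u : ℝ → ℝ be twice continuously differentiable with u' > 0 and u'' < 0, let ħ : [0,1] → ℝ be nonnegative and continuous, let φ : [0,1] → ℝ be increasing and continuously differentiable with φ(0) = 0, let λ > 0 and β ∈ ℝ with u'(β) in the range of u'. Suppose δ ∈ C²[0,1] is concave and satisfies the free boundary problem min{ δ''(p) − ħ(p)·u''((u')⁻¹(δ'(p))), λφ(p) − δ(p) } = 0 for a.e. p ∈ [0,1], with boundary conditions δ(0) = 0 and δ'(1) = u'(β) (in particular δ'(p) lies in the range of u' for all p). Define Q̄(p) := (u')⁻¹(δ'(p)). Then Q̄ belongs to the class 𝒬 of absolutely continuous functions Q on [0,1] with Q(1) = β and 0 ≤ Q' ≤ ħ a.e., and for every Q ∈ 𝒬 one has ∫₀¹ ( u(Q(p)) − λ Q(p) φ'(p) ) dp ≤ ∫₀¹ ( u(Q̄(p)) − λ Q̄(p) φ'(p) ) dp; that is, Q̄ maximizes the Lagrangian functional over 𝒬. -/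

import Mathlib

open MeasureTheory Set

/-- A function `Q` is absolutely continuous on `[0,1]` with a.e. derivative `Q'`,
encoded via the fundamental theorem of calculus representation. -/
def AbsContOn01 (Q Q' : ℝ → ℝ) : Prop :=
  MeasureTheory.IntegrableOn Q' (Set.Icc 0 1) ∧
    ∀ p ∈ Set.Icc (0 : ℝ) 1, Q p = Q 0 + ∫ t in (0 : ℝ)..p, Q' t

/-- Membership in the admissible class `𝒬`: absolutely continuous on `[0,1]`,
terminal value `β`, and `0 ≤ Q' ≤ hbar` a.e. on `[0,1]`. -/
def MemQ (β : ℝ) (hbar : ℝ → ℝ) (Q Q' : ℝ → ℝ) : Prop :=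
  AbsContOn01 Q Q' ∧ Q 1 = β ∧
    (∀ᵐ p ∂(MeasureTheory.volume.restrict (Set.Icc (0 : ℝ) 1)),
      0 ≤ Q' p ∧ Q' p ≤ hbar p)

/-- **Main theorem**: if `δ ∈ C²[0,1]` is concave and solves the free boundary problem
`min{δ'' - hbar·u''((u')⁻¹(δ')), λφ - δ} = 0` a.e. on `[0,1]` with `δ(0) = 0`,
`δ'(1) = u'(β)`, then `Q̄ := (u')⁻¹ ∘ δ'` belongs to `𝒬` and maximizes the
Lagrangian functional over `𝒬`. -/
theorem quantile_optimization_main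
    (u : ℝ → ℝ) (hu : ContDiff ℝ 2 u)
    (hu' : ∀ x, 0 < deriv u x) (hu'' : ∀ x, deriv (deriv u) x < 0)
    (hbar : ℝ → ℝ) (hbar0 : ∀ p ∈ Set.Icc (0 : ℝ) 1, 0 ≤ hbar p)
    (hbarc : ContinuousOn hbar (Set.Icc 0 1))
    (φ : ℝ → ℝ) (hφmono : MonotoneOn φ (Set.Icc 0 1))
    (hφC1 : ContDiffOn ℝ 1 φ (Set.Icc 0 1)) (hφ0 : φ 0 = 0)
    (lam β : ℝ) (hlam : 0 < lam)
    (hβ : deriv u β ∈ Set.range (deriv u))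
    (δ : ℝ → ℝ) (hδC2 : ContDiffOn ℝ 2 δ (Set.Icc 0 1))
    (hδconc : ConcaveOn ℝ (Set.Icc 0 1) δ)
    (hrange : ∀ p ∈ Set.Icc (0 : ℝ) 1,
      derivWithin δ (Set.Icc 0 1) p ∈ Set.range (deriv u))
    (hFBP : ∀ᵐ p ∂(MeasureTheory.volume.restrict (Set.Icc (0 : ℝ) 1)),
      min (derivWithin (derivWithin δ (Set.Icc 0 1)) (Set.Icc 0 1) p -
            hbar p * deriv (deriv u)
              (Function.invFun (deriv u) (derivWithin δ (Set.Icc 0 1) p)))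
          (lam * φ p - δ p) = 0)
    (hδ0 : δ 0 = 0)
    (hδ'1 : derivWithin δ (Set.Icc 0 1) 1 = deriv u β) :
    (∃ Qb', MemQ β hbar
        (fun p => Function.invFun (deriv u) (derivWithin δ (Set.Icc 0 1) p)) Qb') ∧
      ∀ Q Q', MemQ β hbar Q Q' →
        (∫ p in Set.Icc (0 : ℝ) 1,
            (u (Q p) - lam * Q p * derivWithin φ (Set.Icc 0 1) p)) ≤
          ∫ p in Set.Icc (0 : ℝ) 1,
            (u (Function.invFun (deriv u) (derivWithin δ (Set.Icc 0 1) p)) -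
              lam * Function.invFun (deriv u) (derivWithin δ (Set.Icc 0 1) p) *
                derivWithin φ (Set.Icc 0 1) p) := by
  classical
  have hI01 : (0:ℝ) ≤ 1 := zero_le_one
  set I : Set ℝ := Set.Icc 0 1 with hIdef
  have hUD : UniqueDiffOn ℝ I := uniqueDiffOn_Icc one_pos
  -- facts about u
  have hu2 : ContDiff ℝ 1 (deriv u) := by
    rw [show (2 : WithTop ℕ∞) = 1 + 1 from rfl] at hu
    exact (contDiff_succ_iff_deriv.mp hu).2.2
  have hu1d : Differentiable ℝ (deriv u) := hu2.differentiable one_ne_zero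
  have hu2c : Continuous (deriv (deriv u)) := by
    rw [show (1 : WithTop ℕ∞) = 0 + 1 from rfl] at hu2
    exact ((contDiff_succ_iff_deriv.mp hu2).2.2).continuous
  have hsa : StrictAnti (deriv u) := strictAnti_of_deriv_neg hu''
  have hinj : Function.Injective (deriv u) := hsa.injective
  have hli : ∀ x, Function.invFun (deriv u) (deriv u x) = x :=
    Function.leftInverse_invFun hinj
  have hre : ∀ y ∈ Set.range (deriv u), deriv u (Function.invFun (deriv u) y) = y :=
    fun _ hy => Function.invFun_eq hy
  have hu2ne : ∀ x, deriv (deriv u) x ≠ 0 := fun x => ne_of_lt (hu'' x)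
  have hinv : ∀ x₀ : ℝ, HasStrictDerivAt (Function.invFun (deriv u))
      (deriv (deriv u) x₀)⁻¹ (deriv u x₀) := by
    intro x₀
    have h1 : HasStrictDerivAt (deriv u) (deriv (deriv u) x₀) x₀ :=
      hu2.contDiffAt.hasStrictDerivAt one_ne_zero
    exact h1.to_local_left_inverse (hu2ne x₀) (Filter.Eventually.of_forall hli)
  -- facts about δ
  set d1 : ℝ → ℝ := derivWithin δ I with hd1def
  set d2 : ℝ → ℝ := derivWithin d1 I with hd2def
  have hδd : DifferentiableOn ℝ δ I := hδC2.differentiableOn (by norm_num)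
  have hd1C1 : ContDiffOn ℝ 1 d1 I := hδC2.derivWithin hUD (by norm_num)
  have hd1d : DifferentiableOn ℝ d1 I := hd1C1.differentiableOn one_ne_zero
  have hd1c : ContinuousOn d1 I := hd1d.continuousOn
  have hd2c : ContinuousOn d2 I := hd1C1.continuousOn_derivWithin hUD le_rfl
  have hd1h : ∀ p ∈ I, HasDerivWithinAt d1 (d2 p) I p :=
    fun p hp => (hd1d p hp).hasDerivWithinAt
  -- Qb
  set Qb : ℝ → ℝ := fun p => Function.invFun (deriv u) (d1 p) with hQbdef
  have hQbval : ∀ p ∈ I, deriv u (Qb p) = d1 p := fun p hp => hre _ (hrange p hp)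
  set Qb' : ℝ → ℝ := fun p => (deriv (deriv u) (Qb p))⁻¹ * d2 p with hQb'def
  have hQbh : ∀ p ∈ I, HasDerivWithinAt Qb (Qb' p) I p := by
    intro p hp
    obtain ⟨x₀, hx₀⟩ := hrange p hp
    have h1 := hinv x₀
    rw [hx₀] at h1
    have h2 := (h1.hasDerivAt.comp_hasDerivWithinAt p (hd1h p hp))
    have hx0Q : Qb p = x₀ := by rw [hQbdef]; simp only [← hx₀, hli]
    simpa [hQb'def, hx0Q, Function.comp_def] using h2
  have hQbc : ContinuousOn Qb I := fun p hp => (hQbh p hp).continuousWithinAt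
  have hQb'c : ContinuousOn Qb' I := by
    apply ContinuousOn.mul _ hd2c
    exact ((hu2c.comp_continuousOn hQbc).inv₀ (fun p _ => hu2ne (Qb p)))
  have hQb'int : IntegrableOn Qb' I := hQb'c.integrableOn_Icc
  -- antitone d1, d2 ≤ 0
  have hd1anti : AntitoneOn d1 I := hδconc.antitoneOn_derivWithin hδd
  have hd2np : ∀ p ∈ I, d2 p ≤ 0 := by
    intro p hp
    rcases lt_trichotomy p 1 with h | h | h
    · -- right derivative of antitone function nonpos: use limit of slopes
      have hde := hd1h p hp
      rw [hasDerivWithinAt_iff_tendsto_slope] at hde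
      have hmono : Filter.Tendsto (slope d1 p) (nhdsWithin p (Set.Ioc p 1)) (nhds (d2 p)) := by
        apply hde.mono_left
        apply nhdsWithin_mono
        intro t ht
        exact ⟨⟨le_trans hp.1 (le_of_lt ht.1), ht.2⟩, ne_of_gt ht.1⟩
      have hne : (nhdsWithin p (Set.Ioc p 1)).NeBot := by
        apply mem_closure_iff_nhdsWithin_neBot.mp
        rw [closure_Ioc (ne_of_lt h)]
        exact ⟨le_refl p, le_of_lt h⟩
      refine le_of_tendsto hmono ?_
      filter_upwards [self_mem_nhdsWithin] with t ht
      rw [slope_def_field]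
      have := hd1anti hp ⟨le_trans hp.1 (le_of_lt ht.1), ht.2⟩ (le_of_lt ht.1)
      have h3 : t - p > 0 := by linarith [ht.1]
      apply div_nonpos_of_nonpos_of_nonneg <;> linarith
    · -- p = 1 : left limit
      subst h
      have hde := hd1h 1 hp
      rw [hasDerivWithinAt_iff_tendsto_slope] at hde
      have hmono : Filter.Tendsto (slope d1 1) (nhdsWithin 1 (Set.Ico 0 1)) (nhds (d2 1)) := by
        apply hde.mono_left
        apply nhdsWithin_mono
        intro t ht
        exact ⟨⟨ht.1, le_of_lt ht.2⟩, ne_of_lt ht.2⟩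
      have hne : (nhdsWithin (1:ℝ) (Set.Ico 0 1)).NeBot := by
        apply mem_closure_iff_nhdsWithin_neBot.mp
        rw [closure_Ico (by norm_num : (0:ℝ) ≠ 1)]
        exact ⟨zero_le_one, le_refl _⟩
      refine le_of_tendsto hmono ?_
      filter_upwards [self_mem_nhdsWithin] with t ht
      rw [slope_def_field]
      have := hd1anti ⟨ht.1, le_of_lt ht.2⟩ hp (le_of_lt ht.2)
      have h3 : t - 1 < 0 := by linarith [ht.2]
      apply div_nonpos_of_nonneg_of_nonpos <;> linarith
    · exact absurd hp.2 (not_le.mpr h)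
  have hQb'nonneg : ∀ p ∈ I, 0 ≤ Qb' p := by
    intro p hp
    have h1 : (deriv (deriv u) (Qb p))⁻¹ < 0 := inv_lt_zero.mpr (hu'' (Qb p))
    have h2 := hd2np p hp
    show 0 ≤ (deriv (deriv u) (Qb p))⁻¹ * d2 p
    nlinarith
  -- FTC for Qb
  have hQbFTC : ∀ p ∈ I, Qb p = Qb 0 + ∫ t in (0:ℝ)..p, Qb' t := by
    intro p hp
    have hsub : Set.Icc (0:ℝ) p ⊆ I := Set.Icc_subset_Icc le_rfl hp.2
    have := intervalIntegral.integral_eq_sub_of_hasDeriv_right_of_le hp.1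
      (hQbc.mono hsub)
      (fun x hx => by
        have hxI : Set.Icc (0:ℝ) 1 ∈ nhds x := by
          apply Icc_mem_nhds
          · exact hx.1
          · exact lt_of_lt_of_le hx.2 hp.2
        exact (((hQbh x ⟨le_of_lt hx.1, le_trans (le_of_lt hx.2) hp.2⟩).hasDerivAt
          hxI).hasDerivWithinAt)
      )
      (by
        apply ContinuousOn.intervalIntegrable
        rw [Set.uIcc_of_le hp.1]
        exact hQb'c.mono hsub)
    linarith [this]
  have hQb1 : Qb 1 = β := by
    show Function.invFun (deriv u) (d1 1) = β
    rw [hδ'1]; exact hli β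
  -- a.e. bounds for Qb'
  have hQb'ae : ∀ᵐ p ∂(MeasureTheory.volume.restrict I), 0 ≤ Qb' p ∧ Qb' p ≤ hbar p := by
    filter_upwards [hFBP, ae_restrict_mem measurableSet_Icc] with p hmin hp
    refine ⟨hQb'nonneg p hp, ?_⟩
    have hX : (0:ℝ) ≤ d2 p - hbar p * deriv (deriv u) (Function.invFun (deriv u) (d1 p)) := by
      rw [← hmin]; exact min_le_left _ _
    have ha : deriv (deriv u) (Qb p) < 0 := hu'' _
    have hinvneg : (deriv (deriv u) (Qb p))⁻¹ < 0 := inv_lt_zero.mpr ha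
    have hle : hbar p * deriv (deriv u) (Qb p) ≤ d2 p := by
      have hQE : Qb p = Function.invFun (deriv u) (d1 p) := rfl
      rw [hQE]; linarith
    show (deriv (deriv u) (Qb p))⁻¹ * d2 p ≤ hbar p
    have key := mul_le_mul_of_nonpos_left hle (le_of_lt hinvneg)
    have hcanc : (deriv (deriv u) (Qb p))⁻¹ * (hbar p * deriv (deriv u) (Qb p)) = hbar p := by
      rw [mul_comm (hbar p) _, ← mul_assoc, inv_mul_cancel₀ (hu2ne _), one_mul]
    linarith
  have hQbMem : MemQ β hbar Qb Qb' := ⟨⟨hQb'int, hQbFTC⟩, hQb1, hQb'ae⟩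
  constructor
  · exact ⟨Qb', hQbMem⟩
  intro Q Q' hQ
  obtain ⟨⟨hQ'int, hQrep⟩, hQ1, hQ'bd⟩ := hQ
  -- continuity of Q on I
  have hQc : ContinuousOn Q I := by
    have hprim : ContinuousOn (fun x => ∫ t in (0:ℝ)..x, Q' t) I := by
      have hci := intervalIntegral.continuousOn_primitive_interval (μ := volume)
        (f := Q') (a := 0) (b := 1) (by rw [Set.uIcc_of_le hI01]; exact hQ'int)
      rwa [Set.uIcc_of_le hI01] at hci
    exact (continuousOn_const.add hprim).congr (fun p hp => hQrep p hp)
  have hud : Differentiable ℝ u := hu.differentiable (by norm_num)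
  have huc : Continuous u := hud.continuous
  -- φ facts
  set φ' : ℝ → ℝ := derivWithin φ I with hφ'def
  have hφd : DifferentiableOn ℝ φ I := hφC1.differentiableOn one_ne_zero
  have hφ'c : ContinuousOn φ' I := hφC1.continuousOn_derivWithin hUD le_rfl
  set G : ℝ → ℝ := fun t => δ t - lam * φ t with hGdef
  set G' : ℝ → ℝ := fun p => d1 p - lam * φ' p with hG'def
  have hGh : ∀ p ∈ I, HasDerivWithinAt G (G' p) I p := by
    intro p hp
    exact (hδd p hp).hasDerivWithinAt.sub (((hφd p hp).hasDerivWithinAt).const_mul lam)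
  have hGc : ContinuousOn G I := fun p hp => (hGh p hp).continuousWithinAt
  have hG'c : ContinuousOn G' I := hd1c.sub (continuousOn_const.mul hφ'c)
  have hG0 : G 0 = 0 := by show δ 0 - lam * φ 0 = 0; rw [hδ0, hφ0]; ring
  have hGFTC : ∀ t ∈ I, (∫ p in (0:ℝ)..t, G' p) = G t := by
    intro t ht
    have hsub : Set.Icc (0:ℝ) t ⊆ I := Set.Icc_subset_Icc le_rfl ht.2
    have hstep := intervalIntegral.integral_eq_sub_of_hasDeriv_right_of_le ht.1
      (hGc.mono hsub)
      (fun x hx => ((hGh x ⟨le_of_lt hx.1, le_trans (le_of_lt hx.2) ht.2⟩).hasDerivAt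
        (Icc_mem_nhds hx.1 (lt_of_lt_of_le hx.2 ht.2))).hasDerivWithinAt)
      (by
        apply ContinuousOn.intervalIntegrable
        rw [Set.uIcc_of_le ht.1]
        exact hG'c.mono hsub)
    rw [hstep, hG0, sub_zero]
  -- continuous extensions
  set proj : ℝ → ℝ := fun p => max 0 (min 1 p) with hprojdef
  have hprojc : Continuous proj := continuous_const.max (continuous_const.min continuous_id)
  have hprojI : ∀ p, proj p ∈ I := fun p => ⟨le_max_left _ _,
    max_le zero_le_one (min_le_left _ _)⟩
  have hprojid : ∀ p ∈ I, proj p = p := by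
    intro p hp
    show max 0 (min 1 p) = p
    rw [min_eq_right hp.2, max_eq_right hp.1]
  set E : ℝ → ℝ := fun p => G' (proj p) with hEdef
  have hEc : Continuous E := hG'c.comp_continuous hprojc hprojI
  have hEeq : ∀ p ∈ I, E p = G' p := fun p hp => by
    show G' (proj p) = G' p; rw [hprojid p hp]
  obtain ⟨C, hC⟩ : ∃ C, ∀ p ∈ I, ‖G' p‖ ≤ C :=
    IsCompact.exists_bound_of_continuousOn isCompact_Icc hG'c
  have hCE : ∀ p, ‖E p‖ ≤ C := fun p => hC _ (hprojI p)
  have hC0 : (0:ℝ) ≤ C := le_trans (norm_nonneg _) (hCE 0)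
  set QbE : ℝ → ℝ := fun p => Qb' (proj p) with hQbEdef
  have hQbEc : Continuous QbE := hQb'c.comp_continuous hprojc hprojI
  have hQbEeq : ∀ p ∈ I, QbE p = Qb' p := fun p hp => by
    show Qb' (proj p) = Qb' p; rw [hprojid p hp]
  -- measurable version of Q'
  have hQ'm : AEStronglyMeasurable Q' (volume.restrict I) := hQ'int.aestronglyMeasurable
  set Qs : ℝ → ℝ := hQ'm.mk Q' with hQsdef
  have hQsm : StronglyMeasurable Qs := hQ'm.stronglyMeasurable_mk
  have hQseq : Q' =ᵐ[volume.restrict I] Qs := hQ'm.ae_eq_mk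
  set h : ℝ → ℝ := fun t => Qs t - QbE t with hhdef
  have hhm : StronglyMeasurable h := hQsm.sub hQbEc.stronglyMeasurable
  have hheq : ∀ᵐ t ∂(volume.restrict I), h t = Q' t - Qb' t := by
    filter_upwards [hQseq, ae_restrict_mem measurableSet_Icc] with t h1 h2
    show Qs t - QbE t = Q' t - Qb' t
    rw [← h1, hQbEeq t h2]
  have hhint : IntegrableOn h I := by
    apply (hQ'int.sub hQb'int).congr
    filter_upwards [hheq] with t ht
    exact ht.symm
  -- representation of Q - Qb
  have hW1 : Q 1 - Qb 1 = 0 := by rw [hQ1, hQb1]; ring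
  have hwii : ∀ a b : ℝ, a ∈ I → b ∈ I →
      IntervalIntegrable (fun t => Q' t - Qb' t) volume a b := by
    intro a b ha hb
    exact ((hQ'int.mono_set (Set.uIcc_subset_Icc ha hb)).intervalIntegrable).sub
      ((hQb'int.mono_set (Set.uIcc_subset_Icc ha hb)).intervalIntegrable)
  have hQ'ii : ∀ a b : ℝ, a ∈ I → b ∈ I → IntervalIntegrable Q' volume a b := by
    intro a b ha hb
    exact (hQ'int.mono_set (Set.uIcc_subset_Icc ha hb)).intervalIntegrable
  have hQb'ii : ∀ a b : ℝ, a ∈ I → b ∈ I → IntervalIntegrable Qb' volume a b := by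
    intro a b ha hb
    exact (hQb'int.mono_set (Set.uIcc_subset_Icc ha hb)).intervalIntegrable
  have h0I : (0:ℝ) ∈ I := Set.left_mem_Icc.mpr hI01
  have h1I : (1:ℝ) ∈ I := Set.right_mem_Icc.mpr hI01
  have hWrep : ∀ p ∈ I, Q p - Qb p = -∫ t in Set.Ioc p 1, h t := by
    intro p hp
    have e1 : Q p - Qb p = (Q 0 - Qb 0) + ∫ t in (0:ℝ)..p, (Q' t - Qb' t) := by
      rw [hQrep p hp, hQbFTC p hp,
        intervalIntegral.integral_sub (hQ'ii 0 p h0I hp) (hQb'ii 0 p h0I hp)]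
      ring
    have e2 : Q 1 - Qb 1 = (Q 0 - Qb 0) + ∫ t in (0:ℝ)..1, (Q' t - Qb' t) := by
      rw [hQrep 1 h1I, hQbFTC 1 h1I,
        intervalIntegral.integral_sub (hQ'ii 0 1 h0I h1I) (hQb'ii 0 1 h0I h1I)]
      ring
    have e3 : (∫ t in (0:ℝ)..1, (Q' t - Qb' t)) =
        (∫ t in (0:ℝ)..p, (Q' t - Qb' t)) + ∫ t in p..(1:ℝ), (Q' t - Qb' t) :=
      (intervalIntegral.integral_add_adjacent_intervals
        (hwii 0 p h0I hp) (hwii p 1 hp h1I)).symm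
    have e4 : (∫ t in p..(1:ℝ), (Q' t - Qb' t)) = ∫ t in Set.Ioc p 1, (Q' t - Qb' t) :=
      intervalIntegral.integral_of_le hp.2
    have e5 : (∫ t in Set.Ioc p 1, (Q' t - Qb' t)) = ∫ t in Set.Ioc p 1, h t := by
      apply integral_congr_ae
      have hsub : Set.Ioc p 1 ⊆ I := fun t ht => ⟨le_trans hp.1 (le_of_lt ht.1), ht.2⟩
      have := ae_restrict_of_ae_restrict_of_subset hsub hheq
      filter_upwards [this] with t ht
      exact ht.symm
    linarith
  -- the product function
  haveI hμfin : IsFiniteMeasure (volume.restrict I) := by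
    constructor
    rw [Measure.restrict_apply_univ]
    simp [hIdef, Real.volume_Icc]
  set F : ℝ × ℝ → ℝ := fun z => if z.1 < z.2 then E z.1 * h z.2 else 0 with hFdef
  have hFm : StronglyMeasurable F := by
    apply StronglyMeasurable.ite (measurableSet_lt measurable_fst measurable_snd)
    · exact (hEc.comp continuous_fst).stronglyMeasurable.mul
        (hhm.comp_measurable measurable_snd)
    · exact stronglyMeasurable_const
  have hFsec : ∀ p : ℝ, (fun t => F (p, t)) = Set.indicator (Set.Ioi p) (fun t => E p * h t) := by
    intro p
    ext t
    by_cases hc : p < t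
    · simp [hFdef, if_pos hc, Set.indicator_of_mem (Set.mem_Ioi.mpr hc)]
    · simp [hFdef, if_neg hc, Set.indicator_of_notMem (fun hmem => hc (Set.mem_Ioi.mp hmem))]
  have hFsec2 : ∀ t : ℝ, (fun p => F (p, t)) = Set.indicator (Set.Iio t) (fun p => E p * h t) := by
    intro t
    ext p
    by_cases hc : p < t
    · simp [hFdef, if_pos hc, Set.indicator_of_mem (Set.mem_Iio.mpr hc)]
    · simp [hFdef, if_neg hc, Set.indicator_of_notMem (fun hmem => hc (Set.mem_Iio.mp hmem))]
  have hFint : Integrable F ((volume.restrict I).prod (volume.restrict I)) := by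
    rw [MeasureTheory.integrable_prod_iff hFm.aestronglyMeasurable]
    constructor
    · apply Filter.Eventually.of_forall
      intro p
      rw [hFsec p]
      exact (hhint.const_mul (E p)).indicator measurableSet_Ioi
    · apply Integrable.mono' (integrable_const (C * ∫ t in I, ‖h t‖))
      · exact (hFm.norm.integral_prod_right').aestronglyMeasurable
      · apply Filter.Eventually.of_forall
        intro p
        have hb : ∀ t, ‖F (p, t)‖ ≤ C * ‖h t‖ := by
          intro t
          by_cases hc : p < t
          · have : F (p, t) = E p * h t := if_pos hc
            rw [this, norm_mul]
            exact mul_le_mul_of_nonneg_right (hCE p) (norm_nonneg _)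
          · have : F (p, t) = 0 := if_neg hc
            rw [this, norm_zero]
            positivity
        have hnn : (0:ℝ) ≤ ∫ t in I, ‖F (p, t)‖ :=
          integral_nonneg (fun t => norm_nonneg _)
        rw [Real.norm_of_nonneg hnn]
        calc (∫ t in I, ‖F (p, t)‖)
            ≤ ∫ t in I, C * ‖h t‖ := by
              apply integral_mono_of_nonneg (Filter.Eventually.of_forall fun t => norm_nonneg _)
                (hhint.norm.const_mul C) (Filter.Eventually.of_forall hb)
          _ = C * ∫ t in I, ‖h t‖ := by rw [MeasureTheory.integral_const_mul]
  have hswap : (∫ p in I, ∫ t in I, F (p, t)) = ∫ t in I, ∫ p in I, F (p, t) :=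
    MeasureTheory.integral_integral_swap hFint
  have hLHS : (∫ p in I, ∫ t in I, F (p, t)) = ∫ p in I, G' p * (Qb p - Q p) := by
    apply integral_congr_ae
    filter_upwards [ae_restrict_mem measurableSet_Icc] with p hp
    rw [hFsec p, setIntegral_indicator measurableSet_Ioi]
    have hIinter : I ∩ Set.Ioi p = Set.Ioc p 1 := by
      ext t
      constructor
      · rintro ⟨ht, ht2⟩; exact ⟨ht2, ht.2⟩
      · rintro ⟨ht1, ht2⟩; exact ⟨⟨le_trans hp.1 (le_of_lt ht1), ht2⟩, ht1⟩
    rw [hIinter, MeasureTheory.integral_const_mul, hEeq p hp]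
    have hval : (∫ t in Set.Ioc p 1, h t) = Qb p - Q p := by linarith [hWrep p hp]
    rw [hval]
  have hRHS : (∫ t in I, ∫ p in I, F (p, t)) = ∫ t in I, G t * h t := by
    apply integral_congr_ae
    filter_upwards [ae_restrict_mem measurableSet_Icc] with t ht
    rw [hFsec2 t, setIntegral_indicator measurableSet_Iio]
    have hIinter : I ∩ Set.Iio t = Set.Ico 0 t := by
      ext p
      constructor
      · rintro ⟨hp1, hp2⟩; exact ⟨hp1.1, hp2⟩
      · rintro ⟨hp1, hp2⟩; exact ⟨⟨hp1, le_trans (le_of_lt hp2) ht.2⟩, hp2⟩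
    rw [hIinter, MeasureTheory.integral_mul_const]
    have e1 : (∫ p in Set.Ico 0 t, E p) = G t := by
      rw [setIntegral_congr_fun measurableSet_Ico
        (fun p hp => hEeq p ⟨hp.1, le_trans (le_of_lt hp.2) ht.2⟩)]
      rw [integral_Ico_eq_integral_Ioo, ← integral_Ioc_eq_integral_Ioo,
        ← intervalIntegral.integral_of_le ht.1]
      exact hGFTC t ht
    rw [e1, mul_comm]
  have hGh_nonneg : ∀ᵐ t ∂(volume.restrict I), 0 ≤ G t * h t := by
    filter_upwards [hFBP, hheq, hQ'bd, ae_restrict_mem measurableSet_Icc]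
      with t hmin hht hQbd ht
    have hGle : G t ≤ 0 := by
      have h2 : (0:ℝ) ≤ lam * φ t - δ t := by rw [← hmin]; exact min_le_right _ _
      show δ t - lam * φ t ≤ 0
      linarith
    rcases hGle.lt_or_eq with hlt | heq
    · have hX : d2 t - hbar t * deriv (deriv u) (Function.invFun (deriv u) (d1 t)) = 0 := by
        rcases le_total (d2 t - hbar t * deriv (deriv u) (Function.invFun (deriv u) (d1 t)))
          (lam * φ t - δ t) with hle | hle
        · rwa [min_eq_left hle] at hmin
        · exfalso
          rw [min_eq_right hle] at hmin
          have : G t = 0 := by show δ t - lam * φ t = 0; linarith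
          linarith
      have hQb't : Qb' t = hbar t := by
        show (deriv (deriv u) (Qb t))⁻¹ * d2 t = hbar t
        have hQE : Qb t = Function.invFun (deriv u) (d1 t) := rfl
        have hd2t : d2 t = hbar t * deriv (deriv u) (Qb t) := by
          rw [hQE]; linarith
        rw [hd2t, mul_comm (hbar t) _, ← mul_assoc, inv_mul_cancel₀ (hu2ne _), one_mul]
      have hh : h t ≤ 0 := by
        rw [hht, hQb't]
        linarith [hQbd.2]
      nlinarith
    · rw [heq, zero_mul]
  have hIneqA : (∫ p in I, G' p * (Q p - Qb p)) ≤ 0 := by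
    have h1 : (0:ℝ) ≤ ∫ t in I, G t * h t := integral_nonneg_of_ae hGh_nonneg
    have h2 : (∫ p in I, G' p * (Qb p - Q p)) = ∫ t in I, G t * h t := by
      rw [← hLHS, hswap, hRHS]
    have h3 : (∫ p in I, G' p * (Q p - Qb p)) = -∫ p in I, G' p * (Qb p - Q p) := by
      rw [← integral_neg]
      apply integral_congr_ae
      apply Filter.Eventually.of_forall
      intro p
      ring
    rw [h3, h2]
    linarith
  -- tangent line inequality
  have htangent : ∀ x y : ℝ, u x ≤ u y + deriv u y * (x - y) := by
    intro x y
    rcases lt_trichotomy x y with hxy | rfl | hxy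
    · obtain ⟨c, hc, hc2⟩ := exists_deriv_eq_slope u hxy huc.continuousOn
        hud.differentiableOn
      have hne : y - x ≠ 0 := sub_ne_zero.mpr (ne_of_gt hxy)
      have hslope : u y - u x = deriv u c * (y - x) := by
        rw [hc2, div_mul_cancel₀ _ hne]
      have hmono : deriv u y < deriv u c := hsa hc.2
      nlinarith
    · simp
    · obtain ⟨c, hc, hc2⟩ := exists_deriv_eq_slope u hxy huc.continuousOn
        hud.differentiableOn
      have hne : x - y ≠ 0 := sub_ne_zero.mpr (ne_of_gt hxy)
      have hslope : u x - u y = deriv u c * (x - y) := by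
        rw [hc2, div_mul_cancel₀ _ hne]
      have hmono : deriv u c < deriv u y := hsa hc.1
      nlinarith
  have hpt : ∀ p ∈ I, u (Q p) - lam * Q p * φ' p ≤
      (u (Qb p) - lam * Qb p * φ' p) + G' p * (Q p - Qb p) := by
    intro p hp
    have h1 := htangent (Q p) (Qb p)
    rw [hQbval p hp] at h1
    have expand : (u (Qb p) - lam * Qb p * φ' p) + (d1 p - lam * φ' p) * (Q p - Qb p) -
        (u (Q p) - lam * Q p * φ' p) =
        (u (Qb p) + d1 p * (Q p - Qb p)) - u (Q p) := by ring
    have hG'val : G' p = d1 p - lam * φ' p := rfl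
    rw [hG'val]
    linarith
  have hf1int : IntegrableOn (fun p => u (Q p) - lam * Q p * φ' p) I :=
    ((huc.comp_continuousOn hQc).sub
      ((continuousOn_const.mul hQc).mul hφ'c)).integrableOn_Icc
  have hf2int : IntegrableOn (fun p => u (Qb p) - lam * Qb p * φ' p) I :=
    ((huc.comp_continuousOn hQbc).sub
      ((continuousOn_const.mul hQbc).mul hφ'c)).integrableOn_Icc
  have hf3int : IntegrableOn (fun p => G' p * (Q p - Qb p)) I :=
    (hG'c.mul (hQc.sub hQbc)).integrableOn_Icc
  show (∫ p in I, (u (Q p) - lam * Q p * φ' p)) ≤ ∫ p in I, (u (Qb p) - lam * Qb p * φ' p)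
  calc (∫ p in I, (u (Q p) - lam * Q p * φ' p))
      ≤ ∫ p in I, ((u (Qb p) - lam * Qb p * φ' p) + G' p * (Q p - Qb p)) := by
        apply setIntegral_mono_on hf1int (hf2int.add hf3int) measurableSet_Icc hpt
    _ = (∫ p in I, (u (Qb p) - lam * Qb p * φ' p)) + ∫ p in I, G' p * (Q p - Qb p) :=
        integral_add hf2int hf3int
    _ ≤ ∫ p in I, (u (Qb p) - lam * Qb p * φ' p) := by linarith
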